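/- Let A, Z be {0,1}-valued random variables and W a random variable on a finite probability space, with 0 < P(Z=1 | W) < 1 almost surely. Define δ(W) = E[A | W, Z=1] − E[A | W, Z=0], and assume δ(W) ≠ 0 almost surely. Then E[ (−1)^{1−Z} · A / ( P(Z | W) · δ(W) ) | W ] = 1 almost surely, where P(Z|W) denotes P(Z=z|W) evaluated at the realized value z of Z. -/

import Mathlib

open Finset
open scoped Classical BigOperators

noncomputable section

variable {Ω : Type}

/-- Expectation of `f` under pmf `p` on a finite sample space. -/
def E [Fintype Ω] (p f : Ω → ℝ) : ℝ := ∑ ω, p ω * f ω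

/-- Probability of the event `s` under pmf `p`. -/
def Pr [Fintype Ω] (p : Ω → ℝ) (s : Ω → Prop) : ℝ := ∑ ω, if s ω then p ω else 0

/-- Conditional expectation of `f` given the event `s`. -/
def CE [Fintype Ω] (p f : Ω → ℝ) (s : Ω → Prop) : ℝ :=
  (∑ ω, if s ω then p ω * f ω else 0) / Pr p s

/-- The realized instrument propensity P(Z = Z(ω) | W = W(ω)). -/
def PZ {β : Type} [Fintype Ω] (p : Ω → ℝ) (W : Ω → β) (Z : Ω → ℝ) (ω : Ω) : ℝ :=
  Pr p (fun ω' => W ω' = W ω ∧ Z ω' = Z ω) / Pr p (fun ω' => W ω' = W ω)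

/-- The sign (−1)^{1−X(ω)} for a {0,1}-valued variable X. -/
def sgn (X : Ω → ℝ) (ω : Ω) : ℝ := if X ω = 1 then 1 else -1

/-- Unbiasedness of the signed inverse-probability-of-instrument weights:
E[(−1)^{1−Z} A / (P(Z|W) δ(W)) | W] = 1 a.s. -/
theorem stmt1 {β : Type} [Fintype Ω]
    (p : Ω → ℝ) (hp0 : ∀ ω, 0 ≤ p ω) (hp1 : ∑ ω, p ω = 1)
    (A Z : Ω → ℝ) (W : Ω → β)
    (hA : ∀ ω, A ω = 0 ∨ A ω = 1) (hZ : ∀ ω, Z ω = 0 ∨ Z ω = 1)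
    -- 0 < P(Z=1 | W) < 1 a.s.
    (hposW : ∀ ω, 0 < p ω → 0 < Pr p (fun ω' => W ω' = W ω))
    (hposWZ : ∀ ω, 0 < p ω → ∀ z : ℝ, z = 0 ∨ z = 1 →
      0 < Pr p (fun ω' => W ω' = W ω ∧ Z ω' = z))
    (δ : β → ℝ)
    (hδdef : ∀ ω, 0 < p ω →
      δ (W ω) = CE p A (fun ω' => W ω' = W ω ∧ Z ω' = 1)
        - CE p A (fun ω' => W ω' = W ω ∧ Z ω' = 0))
    (hδne : ∀ ω, 0 < p ω → δ (W ω) ≠ 0) :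
    ∀ ω, 0 < p ω →
      CE p (fun ω' => sgn Z ω' * A ω' / (PZ p W Z ω' * δ (W ω')))
        (fun ω' => W ω' = W ω) = 1 := by
  intro ω hpω
  have hPw : 0 < Pr p (fun ω' => W ω' = W ω) := hposW ω hpω
  have hP1 : 0 < Pr p (fun ω' => W ω' = W ω ∧ Z ω' = 1) := hposWZ ω hpω 1 (Or.inr rfl)
  have hP0 : 0 < Pr p (fun ω' => W ω' = W ω ∧ Z ω' = 0) := hposWZ ω hpω 0 (Or.inl rfl)
  have hδ0 : δ (W ω) ≠ 0 := hδne ω hpω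
  have key : (∑ ω', if W ω' = W ω then
        p ω' * (sgn Z ω' * A ω' / (PZ p W Z ω' * δ (W ω'))) else 0)
      = Pr p (fun ω' => W ω' = W ω) / δ (W ω) *
        (CE p A (fun ω' => W ω' = W ω ∧ Z ω' = 1)
         - CE p A (fun ω' => W ω' = W ω ∧ Z ω' = 0)) := by
    simp only [CE]
    rw [Finset.sum_div, Finset.sum_div, ← Finset.sum_sub_distrib, Finset.mul_sum]
    refine Finset.sum_congr rfl fun ω' _ => ?_
    by_cases hWe : W ω' = W ω
    · rcases hZ ω' with hz | hz
      · have hPZ : PZ p W Z ω' = Pr p (fun ω'' => W ω'' = W ω ∧ Z ω'' = 0) /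
            Pr p (fun ω'' => W ω'' = W ω) := by
          simp only [PZ, hWe, hz]
        rw [if_pos hWe, if_neg (by simp [hz]), if_pos ⟨hWe, hz⟩, hPZ, hWe]
        simp only [sgn, hz]
        rw [if_neg (by norm_num)]
        field_simp
        ring
      · have hPZ : PZ p W Z ω' = Pr p (fun ω'' => W ω'' = W ω ∧ Z ω'' = 1) /
            Pr p (fun ω'' => W ω'' = W ω) := by
          simp only [PZ, hWe, hz]
        rw [if_pos hWe, if_pos ⟨hWe, hz⟩, if_neg (by simp [hz]), hPZ, hWe]
        simp only [sgn, hz, if_pos rfl, ↓reduceIte]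
        field_simp
        ring
    · rw [if_neg hWe, if_neg (fun h => hWe h.1), if_neg (fun h => hWe h.1)]
      simp
  unfold CE
  rw [key, ← hδdef ω hpω, div_mul_cancel₀ _ hδ0, div_self hPw.ne']
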